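/- The subdifferential admits its function as a potential along segments: Let E be a real normed vector space, C ⊆ E a nonempty convex set, and φ: E → ℝ ∪ {+∞} a proper function with dom φ = C such that ∂φ(w) ≠ ∅ for every w ∈ C. Then for all x, z ∈ C and for every function g: [0,1] → ℝ such that for each λ ∈ [0,1] there exists w* ∈ ∂φ(z + λ(x − z)) with g(λ) = ⟨w*, x − z⟩, the function g is integrable on [0,1] and ∫₀¹ g(λ) dλ = φ(x) − φ(z). -/

import Mathlib

open MeasureTheory

/-- Subdifferential via the subgradient inequality:
`∂φ(x) = {x* : φ(y) ≥ φ(x) + ⟨x*, y − x⟩ for all y}`. -/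
def subdiff {E : Type*} [NormedAddCommGroup E] [NormedSpace ℝ E]
    (φ : E → EReal) (x : E) : Set (E →L[ℝ] ℝ) :=
  {p | ∀ y : E, φ x + ((p (y - x) : ℝ) : EReal) ≤ φ y}

/-- **The subdifferential admits its function as a potential along segments.**
If `dom φ = C` is convex, `∂φ(w) ≠ ∅` for all `w ∈ C`, then for `x, z ∈ C` and any
selection `g(λ) = ⟨w*_λ, x − z⟩` with `w*_λ ∈ ∂φ(z + λ(x − z))`, `g` is integrable on
`[0,1]` and `∫₀¹ g = φ(x) − φ(z)`. -/
theorem subdifferential_potential_along_segments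
    {E : Type*} [NormedAddCommGroup E] [NormedSpace ℝ E]
    (C : Set E) (hCne : C.Nonempty) (hCconv : Convex ℝ C)
    (φ : E → EReal) (hbot : ∀ x, φ x ≠ ⊥)
    (hdom : ∀ x, φ x < ⊤ ↔ x ∈ C)
    (hsub : ∀ w ∈ C, (subdiff φ w).Nonempty)
    (x z : E) (hx : x ∈ C) (hz : z ∈ C)
    (g : ℝ → ℝ)
    (hg : ∀ lam ∈ Set.Icc (0 : ℝ) 1,
      ∃ p ∈ subdiff φ (z + lam • (x - z)), g lam = p (x - z)) :
    IntegrableOn g (Set.Icc (0 : ℝ) 1) ∧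
    (((∫ lam in Set.Icc (0 : ℝ) 1, g lam) : ℝ) : EReal) = φ x - φ z := by
  classical
  set w : ℝ → E := fun t => z + t • (x - z) with hw
  have hwC : ∀ t ∈ Set.Icc (0 : ℝ) 1, w t ∈ C := by
    intro t ht
    have h := hCconv hz hx (by linarith [ht.2] : (0 : ℝ) ≤ 1 - t) ht.1 (by ring)
    have : (1 - t) • z + t • x = w t := by simp only [hw]; module
    rwa [this] at h
  set F : ℝ → ℝ := fun t => (φ (w t)).toReal with hF
  have hfin : ∀ t ∈ Set.Icc (0 : ℝ) 1, φ (w t) = ((F t : ℝ) : EReal) := by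
    intro t ht
    exact (EReal.coe_toReal (by exact ((hdom (w t)).2 (hwC t ht)).ne) (hbot _)).symm
  -- Key subgradient inequality along the segment
  have key : ∀ t ∈ Set.Icc (0 : ℝ) 1, ∀ s ∈ Set.Icc (0 : ℝ) 1,
      F t + (s - t) * g t ≤ F s := by
    intro t ht s hs
    obtain ⟨p, hp, hgt⟩ := hg t ht
    have h := hp (w s)
    have hws : w s - w t = (s - t) • (x - z) := by simp only [hw]; module
    rw [hws, p.map_smul, smul_eq_mul, ← hgt] at h
    have hwt : z + t • (x - z) = w t := rfl
    rw [hwt] at h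
    rw [hfin t ht, hfin s hs, ← EReal.coe_add, EReal.coe_le_coe_iff] at h
    exact h
  -- g is monotone on [0,1]
  have gmono : MonotoneOn g (Set.Icc (0 : ℝ) 1) := by
    intro a ha b hb hab
    rcases eq_or_lt_of_le hab with rfl | hab
    · exact le_rfl
    have h1 := key a ha b hb
    have h2 := key b hb a ha
    nlinarith
  have hgint : IntegrableOn g (Set.Icc (0 : ℝ) 1) :=
    gmono.integrableOn_isCompact isCompact_Icc
  refine ⟨hgint, ?_⟩
  -- F is Lipschitz hence continuous on [0,1]
  have h01 : ∀ t ∈ Set.Icc (0 : ℝ) 1, |g t| ≤ max |g 0| |g 1| := by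
    intro t ht
    have h0 : g 0 ≤ g t := gmono ⟨le_rfl, zero_le_one⟩ ht ht.1
    have h1 : g t ≤ g 1 := gmono ht ⟨zero_le_one, le_rfl⟩ ht.2
    rcases abs_cases (g t) with ⟨he, _⟩ | ⟨he, _⟩
    · rw [he]; exact le_max_of_le_right (h1.trans (le_abs_self _))
    · rw [he]; exact le_max_of_le_left ((neg_le_neg h0).trans (neg_le_abs _))
  have Fcont : ContinuousOn F (Set.Icc (0 : ℝ) 1) := by
    set M : ℝ := max |g 0| |g 1| with hM
    have hM0 : 0 ≤ M := le_max_of_le_left (abs_nonneg _)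
    have hstep : ∀ a ∈ Set.Icc (0:ℝ) 1, ∀ b ∈ Set.Icc (0:ℝ) 1, b ≤ a →
        |F a - F b| ≤ M * (a - b) := by
      intro a ha b hb hab
      have h1 := key a ha b hb
      have h2 := key b hb a ha
      have hga := h01 a ha
      have hgb := h01 b hb
      rw [abs_le] at hga hgb
      rw [abs_le]
      constructor <;> nlinarith
    have hlip : LipschitzOnWith M.toNNReal F (Set.Icc (0 : ℝ) 1) := by
      rw [lipschitzOnWith_iff_dist_le_mul]
      intro a ha b hb
      rw [Real.dist_eq, Real.dist_eq, Real.coe_toNNReal M hM0]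
      rcases le_total b a with h | h
      · rw [abs_of_nonneg (sub_nonneg.2 h)]
        exact hstep a ha b hb h
      · rw [abs_sub_comm (F a) (F b), abs_sub_comm a b,
          abs_of_nonneg (sub_nonneg.2 h)]
        exact hstep b hb a ha h
    exact hlip.continuousOn
  -- The clamped selection and its right limits
  set G : ℝ → ℝ := fun t => g (max 0 (min 1 t)) with hG
  have hclamp : ∀ t : ℝ, max 0 (min 1 t) ∈ Set.Icc (0 : ℝ) 1 :=
    fun t => ⟨le_max_left _ _, max_le zero_le_one (min_le_left _ _)⟩
  have Gmono : Monotone G := by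
    intro a b hab
    exact gmono (hclamp a) (hclamp b)
      (max_le_max le_rfl (min_le_min le_rfl hab))
  have hGg : ∀ t ∈ Set.Icc (0 : ℝ) 1, G t = g t := by
    intro t ht
    simp only [hG, min_eq_right ht.2, max_eq_right ht.1]
  set d : ℝ → ℝ := fun t => Function.rightLim G t with hd
  have dmono : Monotone d := Gmono.rightLim
  -- F has right derivative d t at every t ∈ (0,1)
  have hderiv : ∀ t ∈ Set.Ioo (0 : ℝ) 1, HasDerivWithinAt F (d t) (Set.Ioi t) t := by
    intro t ht
    have htI : t ∈ Set.Icc (0 : ℝ) 1 := Set.mem_Icc_of_Ioo ht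
    have hFat : ContinuousAt F t :=
      (Fcont t htI).continuousAt (Icc_mem_nhds ht.1 ht.2)
    rw [hasDerivWithinAt_iff_tendsto_slope]
    rw [Set.diff_singleton_eq_self (by simp : t ∉ Set.Ioi t)]
    have hIoc : Set.Ioc t 1 ∈ nhdsWithin t (Set.Ioi t) :=
      Ioc_mem_nhdsGT_of_mem ⟨le_rfl, ht.2⟩
    -- upper bound: slope F t s ≤ G s for s ∈ Ioc t 1
    have hup : ∀ᶠ s in nhdsWithin t (Set.Ioi t), slope F t s ≤ G s := by
      filter_upwards [hIoc] with s hs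
      have hsI : s ∈ Set.Icc (0 : ℝ) 1 := ⟨(ht.1.trans hs.1).le, hs.2⟩
      have h2 := key s hsI t htI
      rw [slope_def_field, div_le_iff₀ (by linarith [hs.1] : (0:ℝ) < s - t),
        hGg s hsI]
      nlinarith
    -- lower bound: d t ≤ slope F t s for s ∈ Ioc t 1
    have hlo : ∀ᶠ s in nhdsWithin t (Set.Ioi t), d t ≤ slope F t s := by
      filter_upwards [hIoc] with s hs
      have hsI : s ∈ Set.Icc (0 : ℝ) 1 := ⟨(ht.1.trans hs.1).le, hs.2⟩
      have hst : (0:ℝ) < s - t := by linarith [hs.1]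
      have hkey : F t + (s - t) * d t ≤ F s := by
        have htend : Filter.Tendsto (fun u => F u + (s - u) * G u)
            (nhdsWithin t (Set.Ioi t)) (nhds (F t + (s - t) * d t)) := by
          apply Filter.Tendsto.add
          · exact (hFat.tendsto.mono_left nhdsWithin_le_nhds)
          · exact (Filter.Tendsto.sub
              (tendsto_const_nhds)
              ((continuous_id.tendsto t).mono_left nhdsWithin_le_nhds)).mul
              (Gmono.tendsto_rightLim t)
        refine le_of_tendsto htend ?_
        filter_upwards [Ioo_mem_nhdsGT_of_mem ⟨le_rfl, hs.1⟩] with u hu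
        have huI : u ∈ Set.Icc (0 : ℝ) 1 :=
          ⟨(ht.1.trans hu.1).le, hu.2.le.trans hs.2⟩
        have := key u huI s hsI
        rw [hGg u huI]
        linarith
      rw [slope_def_field, le_div_iff₀ hst]
      linarith
    exact tendsto_of_tendsto_of_tendsto_of_le_of_le' tendsto_const_nhds
      (Gmono.tendsto_rightLim t) hlo hup
  -- d is integrable on [0,1]
  have hdint : IntegrableOn d (Set.Icc (0 : ℝ) 1) :=
    (dmono.monotoneOn _).integrableOn_isCompact isCompact_Icc
  -- FTC
  have hFTC : (∫ s in (0:ℝ)..1, d s) = F 1 - F 0 :=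
    intervalIntegral.integral_eq_sub_of_hasDeriv_right_of_le zero_le_one Fcont hderiv
      ((intervalIntegrable_iff_integrableOn_Icc_of_le zero_le_one).2 hdint)
  -- g = d a.e. on [0,1]
  have hae : ∫ s in Set.Icc (0:ℝ) 1, g s = ∫ s in Set.Icc (0:ℝ) 1, d s := by
    apply integral_congr_ae
    have hcnt : (({0, 1} : Set ℝ) ∪
        {t | ¬ContinuousWithinAt G (Set.Ioi t) t}).Countable :=
      (Set.countable_insert.2 (Set.countable_singleton _)).union
        (by simpa using (Gmono.monotoneOn Set.univ).countable_not_continuousWithinAt_Ioi)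
    have hnull : volume (({0, 1} : Set ℝ) ∪
        {t | ¬ContinuousWithinAt G (Set.Ioi t) t}) = 0 :=
      hcnt.measure_zero _
    have : ∀ᵐ t ∂(volume.restrict (Set.Icc (0:ℝ) 1)),
        t ∉ ({0, 1} : Set ℝ) ∪ {t | ¬ContinuousWithinAt G (Set.Ioi t) t} := by
      rw [ae_iff]
      refine measure_mono_null (fun t ht => ?_) (by
        rw [Measure.restrict_apply₀' measurableSet_Icc.nullMeasurableSet]
        exact measure_mono_null Set.inter_subset_left hnull)
      exact not_not.mp ht
    filter_upwards [this, ae_restrict_mem measurableSet_Icc] with t htS htI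
    rw [Set.mem_union, not_or] at htS
    obtain ⟨ht01, htc⟩ := htS
    have htcont : ContinuousWithinAt G (Set.Ioi t) t := by
      by_contra h; exact htc h
    have : d t = G t := Gmono.continuousWithinAt_Ioi_iff_rightLim_eq.1 htcont
    rw [this, hGg t htI]
  -- endpoint values
  have hF1 : F 1 = (φ x).toReal := by
    have : w 1 = x := by simp only [hw]; module
    rw [hF]; simp only [this]
  have hF0 : F 0 = (φ z).toReal := by
    have : w 0 = z := by simp only [hw]; module
    rw [hF]; simp only [this]
  have hIcc : ∫ s in Set.Icc (0:ℝ) 1, d s = ∫ s in (0:ℝ)..1, d s := by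
    rw [intervalIntegral.integral_of_le zero_le_one, integral_Icc_eq_integral_Ioc]
  have hval : ∫ s in Set.Icc (0:ℝ) 1, g s = F 1 - F 0 := by
    rw [hae, hIcc, hFTC]
  rw [hval, hF1, hF0, EReal.coe_sub,
    EReal.coe_toReal ((hdom x).2 hx).ne (hbot x),
    EReal.coe_toReal ((hdom z).2 hz).ne (hbot z)]
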